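/- For every integer n ≥ 2, the determinant of the leftover matrix L^n satisfies det(L^n) = (1 − x_1²)(1 − x_2²)⋯(1 − x_n²) · (1 − x_1²x_2²⋯x_n²)^{n−2} in ℤ[x_1,…,x_n]. -/

import Mathlib

open MvPolynomial Finset

lemma green_det' {K : Type*} [Field K] (m : ℕ) (u v : ℕ → K)
    (hu : ∀ k, k < m → u k ≠ 0) :
    (Matrix.of fun i j : Fin m => u (min i.val j.val) * v (max i.val j.val)).det
    = ∏ i : Fin m, (u i.val * v i.val -
        if _ : i.val + 1 < m then u i.val / u (i.val + 1) * (u i.val * v (i.val + 1)) else 0) := by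
  set M : Matrix (Fin m) (Fin m) K :=
    Matrix.of fun i j : Fin m => u (min i.val j.val) * v (max i.val j.val) with hM
  set N : Matrix (Fin m) (Fin m) K :=
    Matrix.of (fun i j : Fin m =>
      if j = i then 1 else if j.val = i.val + 1 then -(u i.val / u (i.val + 1)) else 0) with hN
  have hNdet : N.det = 1 := by
    rw [Matrix.det_of_upperTriangular (M := N) ?_]
    · simp [hN]
    · intro i j hji
      have h1 : j ≠ i := ne_of_lt hji
      have h2 : ¬ (j.val = i.val + 1) := by
        have hji' : (j:ℕ) < (i:ℕ) := hji
        omega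
      simp [hN, h1, h2]
  have hrow : ∀ (i : Fin m) (j : Fin m), (N * M) i j =
      M i j + (if h : i.val + 1 < m then -(u i.val / u (i.val + 1)) * M ⟨i.val + 1, h⟩ j else 0) := by
    intro i j
    rw [Matrix.mul_apply]
    by_cases h : i.val + 1 < m
    · rw [dif_pos h]
      set i' : Fin m := ⟨i.val + 1, h⟩ with hi'
      have hne : i ≠ i' := by
        intro hc; apply_fun Fin.val at hc; simp [hi'] at hc
      rw [Finset.sum_eq_add_of_mem i i' (mem_univ _) (mem_univ _) hne ?_]
      · have : N i i = 1 := by simp [hN]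
        have h2 : N i i' = -(u i.val / u (i.val + 1)) := by
          simp [hN, hi', hne.symm, Fin.ext_iff]
        rw [this, h2]; ring
      · intro c _ hc
        have h1 : c ≠ i := hc.1
        have h2 : ¬ (c.val = i.val + 1) := by
          intro hcv; exact hc.2 (Fin.ext hcv)
        simp [hN, h1, h2]
    · rw [dif_neg h]
      rw [Finset.sum_eq_single i]
      · simp [hN]
      · intro c _ hc
        have h2 : ¬ (c.val = i.val + 1) := by have := c.isLt; omega
        simp [hN, hc, h2]
      · simp
  have hlow : (N * M).BlockTriangular OrderDual.toDual := by
    intro i j hij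
    have hij : i < j := hij
    have hij' : i.val < j.val := Fin.lt_def.mp hij
    have h : i.val + 1 < m := by have := j.isLt; omega
    rw [hrow, dif_pos h]
    have e1 : M i j = u i.val * v j.val := by
      simp [hM, min_eq_left (le_of_lt hij'), max_eq_right (le_of_lt hij')]
    have e2 : M ⟨i.val + 1, h⟩ j = u (i.val + 1) * v j.val := by
      simp only [hM, Matrix.of_apply]
      rw [min_eq_left (by omega), max_eq_right (by omega)]
    rw [e1, e2]
    field_simp [hu _ h]
    ring
  have hdet : (N * M).det = ∏ i : Fin m, (N * M) i i :=
    Matrix.det_of_lowerTriangular _ hlow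
  have : (N * M).det = M.det := by rw [Matrix.det_mul, hNdet, one_mul]
  rw [← this, hdet]
  apply Finset.prod_congr rfl
  intro i _
  rw [hrow]
  by_cases h : i.val + 1 < m
  · rw [dif_pos h, dif_pos h]
    have e1 : M i i = u i.val * v i.val := by simp [hM]
    have e2 : M ⟨i.val + 1, h⟩ i = u i.val * v (i.val + 1) := by
      simp only [hM, Matrix.of_apply]
      rw [min_eq_right (by omega), max_eq_left (by omega)]
    rw [e1, e2]; ring
  · rw [dif_neg h, dif_neg h]
    simp [hM]


lemma tele' {K : Type*} [Field K] (g f : ℕ → K) (hf : ∀ k, f k ≠ 0) :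
    ∀ t, ∏ k ∈ Finset.range t, (g k * (f k * (f (k + 1))⁻¹))
      = (∏ k ∈ Finset.range t, g k) * (f 0 * (f t)⁻¹) := by
  intro t
  induction t with
  | zero => simp [mul_inv_cancel₀ (hf 0)]
  | succ t ih =>
    rw [prod_range_succ, prod_range_succ, ih]
    have h1 := hf t
    have h2 := hf (t + 1)
    have h0 := hf 0
    field_simp

set_option maxHeartbeats 2000000 in
set_option synthInstance.maxHeartbeats 400000 in
theorem leftover_det' (n : ℕ) (hn : 2 ≤ n) :
    (Matrix.of (fun i j : Fin (n-1) =>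
    (∏ a : Fin n, if min i.val j.val < a.val ∧ a.val ≤ max i.val j.val then X a else 1) *
      (1 - ∏ a : Fin n, if a.val ≤ min i.val j.val then X a ^ 2 else 1) *
      (1 - ∏ a : Fin n, if max i.val j.val < a.val then X a ^ 2 else 1) : Matrix (Fin (n-1)) (Fin (n-1)) (MvPolynomial (Fin n) ℤ))).det =
      (∏ a : Fin n, (1 - X a ^ 2)) * (1 - ∏ a : Fin n, X a ^ 2) ^ (n - 2) := by
  obtain ⟨m, rfl⟩ : ∃ m, n = m + 2 := ⟨n - 2, by omega⟩
  clear hn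
  set R := MvPolynomial (Fin (m + 2)) ℤ with hR
  let K := FractionRing R
  let φ : R →+* K := algebraMap R K
  have hinj : Function.Injective φ := IsFractionRing.injective R K
  apply hinj
  rw [RingHom.map_det]
  -- definitions in K
  set x : ℕ → K := fun a => if h : a < m + 2 then φ (X ⟨a, h⟩) else 1 with hx
  set p : ℕ → K := fun k => ∏ a : Fin (m + 2), if a.val ≤ k then φ (X a) else 1 with hp
  set q : ℕ → K := fun k => ∏ a : Fin (m + 2), if k < a.val then φ (X a) else 1 with hq
  set Pi : K := ∏ a : Fin (m + 2), φ (X a) with hPi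
  set u : ℕ → K := fun k => (1 - p k ^ 2) * (p k)⁻¹ with hu
  set v : ℕ → K := fun k => p k * (1 - q k ^ 2) with hv
  -- basic nonvanishing
  have hXne : ∀ a : Fin (m + 2), φ (X a) ≠ 0 := by
    intro a h
    exact (MvPolynomial.X_ne_zero a) (hinj (h.trans (map_zero φ).symm))
  have hxne : ∀ a, x a ≠ 0 := by
    intro a
    by_cases h : a < m + 2
    · simp only [hx, dif_pos h]; exact hXne _
    · simp only [hx, dif_neg h]; exact one_ne_zero
  have hpne : ∀ k, p k ≠ 0 := by
    intro k
    rw [hp]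
    refine Finset.prod_ne_zero_iff.mpr fun a _ => ?_
    split
    · exact hXne a
    · exact one_ne_zero
  have key : ∀ r : R, constantCoeff r = 0 → (1 : K) - φ r ^ 2 ≠ 0 := by
    intro r hr h
    rw [← map_one φ, ← map_pow, ← map_sub] at h
    have h2 : (1 : R) - r ^ 2 = 0 := hinj (h.trans (map_zero φ).symm)
    have := congrArg constantCoeff h2
    simp [hr] at this
  have hφP : ∀ k : ℕ, p k = φ (∏ a : Fin (m + 2), if a.val ≤ k then X a else 1) := by
    intro k
    rw [map_prod, hp]
    exact Finset.prod_congr rfl fun a _ => by rw [apply_ite φ, map_one]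
  have h1p : ∀ k, 1 - p k ^ 2 ≠ 0 := by
    intro k
    rw [hφP k]
    apply key
    rw [map_prod]
    exact Finset.prod_eq_zero (Finset.mem_univ (⟨0, by omega⟩ : Fin (m + 2))) (by simp)
  have h1Pi : 1 - Pi ^ 2 ≠ 0 := by
    have hPiφ : Pi = φ (∏ a : Fin (m + 2), X a) := by rw [map_prod]
    rw [hPiφ]
    apply key
    rw [map_prod]
    exact Finset.prod_eq_zero (Finset.mem_univ (⟨0, by omega⟩ : Fin (m + 2))) (by simp)
  have hune : ∀ k, u k ≠ 0 := fun k =>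
    mul_ne_zero (h1p k) (inv_ne_zero (hpne k))
  -- structural identities
  have hsingle : ∀ (c : ℕ) (hc : c < m + 2) (f : Fin (m + 2) → K),
      (∏ a : Fin (m + 2), if a.val = c then f a else 1) = f ⟨c, hc⟩ := by
    intro c hc f
    rw [Finset.prod_eq_single (⟨c, hc⟩ : Fin (m + 2))]
    · simp
    · intro b _ hb
      exact if_neg fun h => hb (Fin.ext h)
    · simp
  have hpq : ∀ k, p k * q k = Pi := by
    intro k
    rw [hp, hq, hPi]
    simp only
    rw [← Finset.prod_mul_distrib]
    apply Finset.prod_congr rfl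
    intro a _
    by_cases h : a.val ≤ k
    · rw [if_pos h, if_neg (by omega), mul_one]
    · rw [if_neg h, if_pos (by omega), one_mul]
  have hqe : ∀ k, q k = Pi * (p k)⁻¹ := by
    intro k
    rw [← hpq k]
    letI : Field K := inferInstance
    field_simp [hpne k]
  have hstep : ∀ k, k + 1 < m + 2 → p (k + 1) = p k * x (k + 1) := by
    intro k hk
    have hx1 : x (k + 1) = φ (X ⟨k + 1, hk⟩) := by rw [hx]; simp only [dif_pos hk]
    rw [hx1, hp]
    simp only
    rw [← hsingle (k + 1) hk (fun a => φ (X a)), ← Finset.prod_mul_distrib]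
    apply Finset.prod_congr rfl
    intro a _
    by_cases h1 : a.val ≤ k
    · rw [if_pos (by omega), if_pos h1, if_neg (by omega), mul_one]
    · by_cases h2 : a.val = k + 1
      · rw [if_pos (by omega), if_neg h1, if_pos h2, one_mul]
      · rw [if_neg (by omega), if_neg h1, if_neg h2, mul_one]
  have hqstep : ∀ k, k + 1 < m + 2 → q k = q (k + 1) * x (k + 1) := by
    intro k hk
    have hx1 : x (k + 1) = φ (X ⟨k + 1, hk⟩) := by rw [hx]; exact dif_pos hk
    rw [hx1, hq]
    simp only
    rw [← hsingle (k + 1) hk (fun a => φ (X a)), ← Finset.prod_mul_distrib]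
    apply Finset.prod_congr rfl
    intro a _
    by_cases h1 : k + 1 < a.val
    · rw [if_pos (by omega), if_pos h1, if_neg (by omega), mul_one]
    · by_cases h2 : a.val = k + 1
      · rw [if_pos (by omega), if_neg h1, if_pos h2, one_mul]
      · rw [if_neg (by omega), if_neg h1, if_neg h2, mul_one]
  have hp0 : p 0 = x 0 := by
    have hx0 : x 0 = φ (X ⟨0, by omega⟩) := by
      rw [hx]; exact dif_pos (by omega)
    rw [hx0, hp]
    simp only
    rw [← hsingle 0 (by omega) (fun a => φ (X a))]
    exact Finset.prod_congr rfl fun a _ => by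
      by_cases h : a.val = 0
      · rw [if_pos (by omega), if_pos h]
      · rw [if_neg (by omega), if_neg h]
  have hqm : q m = x (m + 1) := by
    have hx1 : x (m + 1) = φ (X ⟨m + 1, by omega⟩) := by
      rw [hx]; exact dif_pos (by omega)
    rw [hx1, hq]
    simp only
    rw [← hsingle (m + 1) (by omega) (fun a => φ (X a))]
    refine Finset.prod_congr rfl fun a _ => ?_
    have := a.isLt
    by_cases h : a.val = m + 1
    · rw [if_pos (by omega), if_pos h]
    · rw [if_neg (by omega), if_neg h]
  -- the mapped matrix is a Green matrix
  have hmat : (Matrix.of (fun i j : Fin (m + 1) =>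
      (∏ a : Fin (m + 2), if min i.val j.val < a.val ∧ a.val ≤ max i.val j.val then X a else 1) *
        (1 - ∏ a : Fin (m + 2), if a.val ≤ min i.val j.val then X a ^ 2 else 1) *
        (1 - ∏ a : Fin (m + 2), if max i.val j.val < a.val then X a ^ 2 else 1) :
        Matrix (Fin (m + 1)) (Fin (m + 1)) R)).map φ
      = Matrix.of fun i j : Fin (m + 1) => u (min i.val j.val) * v (max i.val j.val) := by
    ext i j
    simp only [Matrix.map_apply, Matrix.of_apply]
    set s := min i.val j.val with hs
    set t := max i.val j.val with hts
    have hst : s ≤ t := min_le_max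
    rw [map_mul, map_mul, map_sub, map_sub, map_one, map_prod, map_prod, map_prod]
    have hB : (∏ a : Fin (m + 2), φ (if a.val ≤ s then X a ^ 2 else 1)) = p s ^ 2 := by
      rw [hp]
      simp only
      rw [← Finset.prod_pow]
      exact Finset.prod_congr rfl fun a _ => by by_cases h : a.val ≤ s <;> simp [h]
    have hC : (∏ a : Fin (m + 2), φ (if t < a.val then X a ^ 2 else 1)) = q t ^ 2 := by
      rw [hq]
      simp only
      rw [← Finset.prod_pow]
      exact Finset.prod_congr rfl fun a _ => by by_cases h : t < a.val <;> simp [h]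
    have hA : (∏ a : Fin (m + 2), φ (if s < a.val ∧ a.val ≤ t then X a else 1))
        = p t * (p s)⁻¹ := by
      have h2 : p s * (∏ a : Fin (m + 2), (if s < a.val ∧ a.val ≤ t then φ (X a) else 1))
          = p t := by
        rw [hp]
        simp only
        rw [← Finset.prod_mul_distrib]
        refine Finset.prod_congr rfl fun a _ => ?_
        by_cases h1 : a.val ≤ s
        · rw [if_pos h1, if_neg (by omega), if_pos (by omega), mul_one]
        · by_cases h2 : a.val ≤ t
          · rw [if_neg h1, if_pos ⟨by omega, h2⟩, if_pos h2, one_mul]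
          · rw [if_neg h1, if_neg (by tauto), if_neg h2, mul_one]
      have h3 : (∏ a : Fin (m + 2), φ (if s < a.val ∧ a.val ≤ t then X a else 1))
          = ∏ a : Fin (m + 2), (if s < a.val ∧ a.val ≤ t then φ (X a) else 1) :=
        Finset.prod_congr rfl fun a _ => by rw [apply_ite φ, map_one]
      rw [h3, eq_mul_inv_iff_mul_eq₀ (hpne s), mul_comm]
      exact h2
    rw [hA, hB, hC, hu, hv]
    simp only
    ring
  have main : ((Matrix.of (fun i j : Fin (m + 1) =>
      (∏ a : Fin (m + 2), if min i.val j.val < a.val ∧ a.val ≤ max i.val j.val then X a else 1) *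
        (1 - ∏ a : Fin (m + 2), if a.val ≤ min i.val j.val then X a ^ 2 else 1) *
        (1 - ∏ a : Fin (m + 2), if max i.val j.val < a.val then X a ^ 2 else 1)) :
        Matrix (Fin (m + 1)) (Fin (m + 1)) R).map φ).det
      = φ ((∏ a : Fin (m + 2), (1 - X a ^ 2)) * (1 - ∏ a : Fin (m + 2), X a ^ 2) ^ m) := by
    rw [hmat, green_det' (m + 1) u v (fun k _ => hune k)]
    -- push φ through the right-hand side
    simp only [map_mul, map_pow, map_sub, map_one, map_prod]
    rw [Finset.prod_pow, ← hPi]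
    -- evaluate the diagonal product
    simp only [dite_eq_ite]
    rw [Fin.prod_univ_eq_prod_range
      (fun k => u k * v k - if k + 1 < m + 1 then u k / u (k + 1) * (u k * v (k + 1)) else 0) (m + 1)]
    rw [Finset.prod_range_succ]
    rw [if_neg (lt_irrefl (m + 1)), sub_zero]
    have hd1 : ∀ k ∈ Finset.range m,
        (u k * v k - if k + 1 < m + 1 then u k / u (k + 1) * (u k * v (k + 1)) else 0)
        = ((1 - Pi ^ 2) * (1 - x (k + 1) ^ 2)) * ((1 - p k ^ 2) * ((1 - p (k + 1) ^ 2))⁻¹) := by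
      intro k hk
      have hkm : k < m := Finset.mem_range.mp hk
      rw [if_pos (by omega)]
      simp only [hu, hv]
      rw [← hpq k, hqstep k (by omega), hstep k (by omega)]
      rw [div_eq_mul_inv, mul_inv, inv_inv]
      have h1 := hpne k
      have h2 := hxne (k + 1)
      have h3 : 1 - (p k * x (k + 1)) ^ 2 ≠ 0 := by
        rw [← hstep k (by omega)]; exact h1p (k + 1)
      have h3' : 1 - p k ^ 2 * x (k + 1) ^ 2 ≠ 0 := by rw [← mul_pow]; exact h3
      letI : Field K := inferInstance
      field_simp
      ring
    rw [Finset.prod_congr rfl hd1,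
      tele' (fun k => (1 - Pi ^ 2) * (1 - x (k + 1) ^ 2)) (fun k => 1 - p k ^ 2) h1p m]
    rw [Finset.prod_mul_distrib, Finset.prod_const, Finset.card_range]
    -- right-hand side product over Fin (m+2)
    have hXa : ∀ a : Fin (m + 2), φ (X a) = x a.val := by
      intro a
      show φ (X a) = if h : a.val < m + 2 then φ (X ⟨a.val, h⟩) else 1
      rw [dif_pos a.isLt]
    have eR : (∏ a : Fin (m + 2), (1 - φ (X a) ^ 2))
        = ((∏ k ∈ Finset.range m, (1 - x (k + 1) ^ 2)) * (1 - x (m + 1) ^ 2)) * (1 - x 0 ^ 2) := by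
      have e0 : (∏ a : Fin (m + 2), (1 - φ (X a) ^ 2))
          = ∏ k ∈ Finset.range (m + 2), (1 - x k ^ 2) := by
        rw [← Fin.prod_univ_eq_prod_range (fun k => 1 - x k ^ 2) (m + 2)]
        exact Finset.prod_congr rfl fun a _ => by rw [hXa a]
      rw [e0]
      rw [Finset.prod_range_succ' (fun k => 1 - x k ^ 2) (m + 1), Finset.prod_range_succ]
    rw [eR]
    -- final algebraic cleanup
    simp only [hu, hv]
    rw [hqm, hp0]
    have h4 := h1p m
    have h5 := hpne m
    letI : Field K := inferInstance
    field_simp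

  exact main


/-- The leftover matrix `L^n`: the symmetric `(n-1) × (n-1)` matrix over
`ℤ[x_1, …, x_n]` whose `(i, j)` entry (in 1-based terms, for `i ≤ j`) is
`(∏_{a=i+1}^{j} x_a) · (1 − ∏_{a=1}^{i} x_a²) · (1 − ∏_{a=j+1}^{n} x_a²)`.
Here the indices of `Fin (n-1)` and `Fin n` are 0-based. -/
noncomputable def leftover (n : ℕ) :
    Matrix (Fin (n - 1)) (Fin (n - 1)) (MvPolynomial (Fin n) ℤ) :=
  Matrix.of fun i j =>
    (∏ a : Fin n, if min i.val j.val < a.val ∧ a.val ≤ max i.val j.val then X a else 1) *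
      (1 - ∏ a : Fin n, if a.val ≤ min i.val j.val then X a ^ 2 else 1) *
      (1 - ∏ a : Fin n, if max i.val j.val < a.val then X a ^ 2 else 1)

/-- For every `n ≥ 2`,
`det (L^n) = (1 − x_1²) ⋯ (1 − x_n²) · (1 − x_1² x_2² ⋯ x_n²)^(n-2)`. -/
theorem leftover_det (n : ℕ) (hn : 2 ≤ n) :
    (leftover n).det =
      (∏ a : Fin n, (1 - X a ^ 2)) * (1 - ∏ a : Fin n, X a ^ 2) ^ (n - 2) :=
  leftover_det' n hn
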